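/- Let M be an n × w t-disjunct binary matrix and let u be a column of M with weight |u|. Then deleting column u and all rows in which u has a 1 yields an (n - |u|) × (w - 1) matrix that is (t-1)-disjunct. -/
import Mathlib


/-- A binary matrix `M` is `t`-disjunct: for every column `u` and every nonempty set `S`
of at most `t` other columns, the boolean sum of the columns in `S` does not contain `u`. -/
def Disjunct {R C : Type*} (t : ℕ) (M : R → C → Bool) : Prop :=
  ∀ (u : C) (S : Finset C), u ∉ S → S.Nonempty → S.card ≤ t →
    ∃ r : R, M r u = true ∧ ∀ v ∈ S, M r v = false

theorem stmt_8 (n w t : ℕ) (M : Fin n → Fin w → Bool) (hd : Disjunct t M) (u : Fin w) :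
    Fintype.card {r : Fin n // M r u = false}
        = n - (Finset.univ.filter fun r => M r u = true).card ∧
      Fintype.card {v : Fin w // v ≠ u} = w - 1 ∧
      Disjunct (t - 1)
        (fun (r : {r : Fin n // M r u = false}) (v : {v : Fin w // v ≠ u}) => M r.1 v.1) := by
  refine ⟨?_, ?_, ?_⟩
  · rw [Fintype.card_subtype]
    have := Finset.card_filter_add_card_filter_not
      (s := (Finset.univ : Finset (Fin n))) (p := fun r => M r u = true)
    simp only [Finset.card_univ, Fintype.card_fin, Bool.not_eq_true] at this
    omega
  · rw [Fintype.card_subtype]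
    simp [Finset.filter_ne', Finset.card_erase_of_mem]
  · intro u' S hus hSne hScard
    have ht : 1 ≤ t := by
      have := hSne.card_pos; omega
    set S' : Finset (Fin w) := insert u (S.image Subtype.val) with hS'
    have hu' : (u' : Fin w) ∉ S' := by
      simp only [hS', Finset.mem_insert, Finset.mem_image]
      push_neg
      refine ⟨u'.2, ?_⟩
      rintro v hv hveq
      exact hus (Subtype.ext hveq ▸ hv)
    have hcard : S'.card ≤ t := by
      have h1 : S'.card ≤ (S.image Subtype.val).card + 1 := Finset.card_insert_le _ _
      have h2 : (S.image Subtype.val).card ≤ S.card := Finset.card_image_le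
      omega
    obtain ⟨r, hr1, hr2⟩ := hd u' S' hu' ⟨u, Finset.mem_insert_self _ _⟩ hcard
    have hrf : M r u = false := hr2 u (Finset.mem_insert_self _ _)
    refine ⟨⟨r, hrf⟩, hr1, ?_⟩
    intro v hv
    exact hr2 v.1 (Finset.mem_insert_of_mem (Finset.mem_image_of_mem _ hv))
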